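/- Let G be a directed graph on n vertices and let P1, P2 be two vertex-disjoint directed paths such that every strongly connected component of G minus the vertices of P1 and P2 has at most αn vertices, for some α with 1/2 ≤ α < 1. Then there exists a single directed path P3 in G such that every strongly connected component of G minus the vertices of P3 has at most αn vertices. -/

import Mathlib

/-- Reachability in the directed graph `G` avoiding the vertex set `S`. -/
def DReach {V : Type} (G : V → V → Prop) (S : Set V) (u v : V) : Prop :=
  Relation.ReflTransGen (fun a b => G a b ∧ a ∉ S ∧ b ∉ S) u v

/-- `S` is an α-separator of the digraph `G`: every strongly connected component of
`G − S` has at most `α · n` vertices. -/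
def DSep {V : Type} [Fintype V] (G : V → V → Prop) (S : Set V) (α : ℚ) : Prop :=
  ∀ v : V, v ∉ S →
    (({w : V | DReach G S v w ∧ DReach G S w v}.ncard : ℚ)) ≤ α * (Fintype.card V : ℚ)

/-- `p` is a (nonempty) simple directed path in `G`. -/
def DIsPath {V : Type} (G : V → V → Prop) (p : List V) : Prop :=
  p ≠ [] ∧ p.Nodup ∧ p.Chain' G


def DClass {V : Type} (G : V → V → Prop) (S : Set V) (v : V) : Set V :=
  {w : V | DReach G S v w ∧ DReach G S w v}

lemma dreach_mono {V : Type} (G : V → V → Prop) {S T : Set V} (h : S ⊆ T) {u v : V}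
    (hr : DReach G T u v) : DReach G S u v :=
  Relation.ReflTransGen.mono (p := fun a b => G a b ∧ a ∉ S ∧ b ∉ S) (fun _ _ hab => ⟨hab.1, fun hs => hab.2.1 (h hs), fun hs => hab.2.2 (h hs)⟩) u v hr

lemma dsep_mono {V : Type} [Fintype V] {G : V → V → Prop} {α : ℚ} {S T : Set V} (hST : S ⊆ T)
    (h : DSep G S α) : DSep G T α := by
  intro v hv
  have hvS : v ∉ S := fun hz => hv (hST hz)
  refine le_trans ?_ (h v hvS)
  have hsub : {w : V | DReach G T v w ∧ DReach G T w v} ⊆ {w : V | DReach G S v w ∧ DReach G S w v} :=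
    fun w hw => ⟨dreach_mono G hST hw.1, dreach_mono G hST hw.2⟩
  exact_mod_cast Set.ncard_le_ncard hsub (Set.toFinite _)

lemma dclass_not_mem {V : Type} {G : V → V → Prop} {S : Set V} {v : V} (hv : v ∉ S) {w : V}
    (hw : w ∈ DClass G S v) : w ∉ S := by
  rcases Relation.ReflTransGen.cases_tail hw.1 with h | ⟨c, _, he⟩
  · rwa [h]
  · exact he.2.2

lemma dreach_upgrade {V : Type} {G : V → V → Prop} {S1 S : Set V} {v1 : V}
    (hclass : ∀ z, z ∈ DClass G S1 v1 → z ∉ S) :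
    ∀ w, DReach G S1 v1 w → DReach G S1 w v1 → DReach G S v1 w := by
  intro w h
  induction h with
  | refl => intro _; exact Relation.ReflTransGen.refl
  | @tail c w h' e ih =>
    intro hw
    have hcv : DReach G S1 c v1 := Relation.ReflTransGen.head e hw
    have hc : c ∈ DClass G S1 v1 := ⟨h', hcv⟩
    have hwc : w ∈ DClass G S1 v1 := ⟨h'.tail e, hw⟩
    exact (ih hcv).tail ⟨e.1, hclass c hc, hclass w hwc⟩

lemma dreach_upgrade' {V : Type} {G : V → V → Prop} {S1 S : Set V} {v1 : V}
    (hclass : ∀ z, z ∈ DClass G S1 v1 → z ∉ S) :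
    ∀ w, DReach G S1 w v1 → DReach G S1 v1 w → DReach G S w v1 := by
  intro w h
  induction h using Relation.ReflTransGen.head_induction_on with
  | refl => intro _; exact Relation.ReflTransGen.refl
  | @head a c e h' ih =>
    intro ha
    have hcv : DReach G S1 v1 c := ha.tail e
    have hc : c ∈ DClass G S1 v1 := ⟨hcv, h'⟩
    have haz : a ∈ DClass G S1 v1 := ⟨ha, Relation.ReflTransGen.head e h'⟩
    exact Relation.ReflTransGen.head ⟨e.1, hclass a haz, hclass c hc⟩ (ih hcv)

lemma big_class_meets {V : Type} [Fintype V] {G : V → V → Prop} {α : ℚ} {S S1 : Set V}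
    (hsep : DSep G S α) {v1 : V} (hv1 : v1 ∉ S1)
    (hbig : ¬ (((DClass G S1 v1).ncard : ℚ) ≤ α * (Fintype.card V : ℚ))) :
    ∃ z ∈ DClass G S1 v1, z ∈ S := by
  by_contra hcon
  push_neg at hcon
  have hv1m : v1 ∈ DClass G S1 v1 := ⟨Relation.ReflTransGen.refl, Relation.ReflTransGen.refl⟩
  have hv1S : v1 ∉ S := hcon v1 hv1m
  have hsub : DClass G S1 v1 ⊆ DClass G S v1 := by
    intro w hw
    exact ⟨dreach_upgrade hcon w hw.1 hw.2, dreach_upgrade' hcon w hw.2 hw.1⟩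
  have hle : ((DClass G S1 v1).ncard : ℚ) ≤ ((DClass G S v1).ncard : ℚ) := by
    exact_mod_cast Set.ncard_le_ncard hsub (Set.toFinite _)
  exact hbig (hle.trans (hsep v1 hv1S))

lemma inter_nonempty {V : Type} [Fintype V] {α : ℚ} (hα : 1/2 ≤ α) {Z1 Z2 : Set V}
    (h1 : ¬ ((Z1.ncard : ℚ) ≤ α * (Fintype.card V : ℚ)))
    (h2 : ¬ ((Z2.ncard : ℚ) ≤ α * (Fintype.card V : ℚ))) :
    (Z1 ∩ Z2).Nonempty := by
  rw [Set.nonempty_iff_ne_empty]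
  intro hd
  have hdisj : Disjoint Z1 Z2 := Set.disjoint_iff_inter_eq_empty.mpr hd
  have hunion : (Z1 ∪ Z2).ncard = Z1.ncard + Z2.ncard :=
    Set.ncard_union_eq hdisj (Set.toFinite _) (Set.toFinite _)
  have hle : (Z1 ∪ Z2).ncard ≤ Fintype.card V := by
    have := Set.ncard_le_ncard (Set.subset_univ (Z1 ∪ Z2)) (Set.toFinite _)
    simpa [Set.ncard_univ] using this
  have hleq : ((Z1.ncard : ℚ) + (Z2.ncard : ℚ)) ≤ (Fintype.card V : ℚ) := by
    exact_mod_cast hunion ▸ hle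
  push_neg at h1 h2
  have hn : (0:ℚ) ≤ (Fintype.card V : ℚ) := by positivity
  have h2a : (1/2) * (Fintype.card V : ℚ) ≤ α * (Fintype.card V : ℚ) :=
    mul_le_mul_of_nonneg_right hα hn
  linarith

lemma chain_targets {V : Type} {r : V → V → Prop} {P : V → Prop} (hP : ∀ a b, r a b → P b) :
    ∀ (l : List V) (a : V), List.Chain r a l → ∀ y ∈ l, P y := by
  intro l
  induction l with
  | nil => intro a _ y hy; cases hy
  | cons c t ih =>
    intro a hc y hy
    simp only [List.Chain, List.chain_cons] at hc
    rcases List.mem_cons.mp hy with h | h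
    · exact h ▸ hP a c hc.1
    · exact ih c hc.2 y h

lemma chain_append_chain {V : Type} {r : V → V → Prop} :
    ∀ (l₁ : List V) (a b : V) (l₂ : List V), List.Chain r a l₁ →
      (a :: l₁).getLast? = some b → List.Chain r b l₂ →
      List.Chain r a (l₁ ++ l₂) := by
  intro l₁
  induction l₁ with
  | nil =>
    intro a b l₂ _ hl hb
    simp only [List.getLast?_singleton, Option.some_inj] at hl
    simpa [hl] using hb
  | cons c t ih =>
    intro a b l₂ hc hl hb
    simp only [List.Chain, List.chain_cons] at hc
    simp only [List.cons_append, List.Chain, List.chain_cons]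
    refine ⟨hc.1, ih c b l₂ hc.2 ?_ hb⟩
    rwa [List.getLast?_cons_cons] at hl

lemma chain_dedup {V : Type} {r : V → V → Prop} :
    ∀ (n : ℕ) (l : List V) (a : V), l.length ≤ n → List.Chain r a l →
      ∃ l', List.Chain r a l' ∧
        (a :: l').getLast? = (a :: l).getLast? ∧
        (a :: l').Nodup ∧ ∀ x ∈ l', x ∈ l := by
  intro n
  induction n with
  | zero =>
    intro l a hl _
    have : l = [] := List.length_eq_zero_iff.mp (Nat.le_zero.mp hl)
    subst this
    exact ⟨[], List.Chain.nil, rfl, List.nodup_singleton a, by simp⟩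
  | succ n ih =>
    intro l a hl hc
    by_cases ha : a ∈ l
    · obtain ⟨s, t, rfl⟩ := List.append_of_mem ha
      have hct : List.Chain r a t := (List.isChain_cons_split.mp hc).2
      have hlt : t.length ≤ n := by
        have := hl; simp [List.length_append] at this; omega
      obtain ⟨l', h1, h2, h3, h4⟩ := ih t a hlt hct
      refine ⟨l', h1, ?_, h3, fun x hx => by simp [h4 x hx]⟩
      rw [h2]
      exact (List.getLast?_append_cons (a :: s) a t).symm
    · cases l with
      | nil => exact ⟨[], List.Chain.nil, rfl, List.nodup_singleton a, by simp⟩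
      | cons c t =>
        simp only [List.Chain, List.chain_cons] at hc
        have hlt : t.length ≤ n := by simp at hl; omega
        obtain ⟨l', h1, h2, h3, h4⟩ := ih t c hlt hc.2
        refine ⟨c :: l', List.chain_cons.mpr ⟨hc.1, h1⟩, ?_, ?_, ?_⟩
        · rw [List.getLast?_cons_cons, h2, List.getLast?_cons_cons]
        · rw [List.nodup_cons]
          refine ⟨?_, h3⟩
          intro hmem
          rcases List.mem_cons.mp hmem with h | h
          · exact ha (h ▸ List.mem_cons_self (a := a) (l := t))
          · exact ha (List.mem_cons_of_mem c (h4 a h))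
        · intro x hx
          rcases List.mem_cons.mp hx with h | h
          · exact h ▸ List.mem_cons_self (a := c) (l := t)
          · exact List.mem_cons_of_mem c (h4 x h)
lemma aux {V : Type} [Fintype V] (G : V → V → Prop) (α : ℚ) (hα1 : 1/2 ≤ α) :
    ∀ (N : ℕ) (p1 p2 : List V), p1.length + p2.length ≤ N →
    p1.Nodup → p1.Chain' G → p2.Nodup → p2.Chain' G →
    (∀ v, v ∈ p1 → v ∉ p2) →
    DSep G {v | v ∈ p1 ∨ v ∈ p2} α →
    ∃ p3 : List V, p3.Nodup ∧ p3.Chain' G ∧ DSep G {v | v ∈ p3} α := by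
  intro N
  induction N with
  | zero =>
    intro p1 p2 hlen _ _ _ _ _ hsep
    have h1 : p1 = [] := List.length_eq_zero_iff.mp (by omega)
    have h2 : p2 = [] := List.length_eq_zero_iff.mp (by omega)
    subst h1; subst h2
    exact ⟨[], List.nodup_nil, List.isChain_nil, by simpa using hsep⟩
  | succ n ih =>
    intro p1 p2 hlen h1n h1c h2n h2c hdisj hsep
    rcases eq_or_ne p2 [] with rfl | hp2ne
    · refine ⟨p1, h1n, h1c, ?_⟩
      have : {v | v ∈ p1 ∨ v ∈ ([] : List V)} = {v | v ∈ p1} := by ext v; simp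
      exact this ▸ hsep
    rcases eq_or_ne p1 [] with rfl | hp1ne
    · refine ⟨p2, h2n, h2c, ?_⟩
      have : {v | v ∈ ([] : List V) ∨ v ∈ p2} = {v | v ∈ p2} := by ext v; simp
      exact this ▸ hsep
    by_cases hA : DSep G {v | v ∈ p1.dropLast ∨ v ∈ p2} α
    · refine ih p1.dropLast p2 ?_ (h1n.sublist (List.dropLast_sublist p1)) h1c.dropLast h2n h2c
        (fun v hv => hdisj v (List.dropLast_subset p1 hv)) hA
      have : p1.dropLast.length = p1.length - 1 := List.length_dropLast
      have h1 : 1 ≤ p1.length := List.length_pos_iff.mpr hp1ne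
      omega
    by_cases hB : DSep G {v | v ∈ p1 ∨ v ∈ p2.tail} α
    · refine ih p1 p2.tail ?_ h1n h1c (h2n.sublist (List.tail_sublist p2)) h2c.tail
        (fun v hv hvt => hdisj v hv (List.mem_of_mem_tail hvt)) hB
      have : p2.tail.length = p2.length - 1 := List.length_tail
      have h2 : 1 ≤ p2.length := List.length_pos_iff.mpr hp2ne
      omega
    -- main case
    set t1 := p1.getLast hp1ne with ht1def
    set h2v := p2.head hp2ne with hh2def
    set S : Set V := {v | v ∈ p1 ∨ v ∈ p2} with hSdef
    set S1 : Set V := {v | v ∈ p1.dropLast ∨ v ∈ p2} with hS1def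
    set S2 : Set V := {v | v ∈ p1 ∨ v ∈ p2.tail} with hS2def
    unfold DSep at hA hB
    push_neg at hA hB
    obtain ⟨v1, hv1S1, hbig1⟩ := hA
    obtain ⟨v2, hv2S2, hbig2⟩ := hB
    have hbig1 : ¬ (((DClass G S1 v1).ncard : ℚ) ≤ α * (Fintype.card V : ℚ)) := not_le.mpr hbig1
    have hbig2 : ¬ (((DClass G S2 v2).ncard : ℚ) ≤ α * (Fintype.card V : ℚ)) := not_le.mpr hbig2
    have ht1p1 : t1 ∈ p1 := List.getLast_mem hp1ne
    have hh2p2 : h2v ∈ p2 := List.head_mem hp2ne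
    have hp1eq : p1.dropLast ++ [t1] = p1 := List.dropLast_append_getLast hp1ne
    have hp2eq : h2v :: p2.tail = p2 := List.cons_head_tail hp2ne
    have ht1dl : t1 ∉ p1.dropLast := by
      intro hmem
      have := h1n
      rw [← hp1eq, List.nodup_append'] at this
      exact this.2.2 hmem (List.mem_singleton_self t1)
    have hh2tl : h2v ∉ p2.tail := by
      intro hmem
      have := h2n
      rw [← hp2eq, List.nodup_cons] at this
      exact this.1 hmem
    have hmemS1 : ∀ v, v ∈ S → v ∈ S1 ∨ v = t1 := by
      intro v hv
      rcases hv with hv | hv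
      · rw [← hp1eq, List.mem_append] at hv
        rcases hv with hv | hv
        · exact Or.inl (Or.inl hv)
        · exact Or.inr (List.mem_singleton.mp hv)
      · exact Or.inl (Or.inr hv)
    have hmemS2 : ∀ v, v ∈ S → v ∈ S2 ∨ v = h2v := by
      intro v hv
      rcases hv with hv | hv
      · exact Or.inl (Or.inl hv)
      · rw [← hp2eq, List.mem_cons] at hv
        rcases hv with hv | hv
        · exact Or.inr hv
        · exact Or.inl (Or.inr hv)
    have ht1Z : t1 ∈ DClass G S1 v1 := by
      obtain ⟨z, hzZ, hzS⟩ := big_class_meets hsep hv1S1 hbig1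
      have hzS1 : z ∉ S1 := dclass_not_mem hv1S1 hzZ
      rcases hmemS1 z hzS with h | h
      · exact absurd h hzS1
      · exact h ▸ hzZ
    have hh2Z : h2v ∈ DClass G S2 v2 := by
      obtain ⟨z, hzZ, hzS⟩ := big_class_meets hsep hv2S2 hbig2
      have hzS2 : z ∉ S2 := dclass_not_mem hv2S2 hzZ
      rcases hmemS2 z hzS with h | h
      · exact absurd h hzS2
      · exact h ▸ hzZ
    obtain ⟨x, hx1, hx2⟩ := inter_nonempty hα1 hbig1 hbig2
    have hxS1 : x ∉ S1 := dclass_not_mem hv1S1 hx1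
    have hxS2 : x ∉ S2 := dclass_not_mem hv2S2 hx2
    have hxt1 : x ≠ t1 := fun h => hxS2 (h ▸ Or.inl ht1p1)
    have hxh2 : x ≠ h2v := fun h => hxS1 (h ▸ Or.inr hh2p2)
    have ht1h2 : t1 ≠ h2v := fun h => hdisj t1 ht1p1 (h ▸ hh2p2)
    have hr1 : DReach G S1 t1 x := ht1Z.2.trans hx1.1
    have hr2 : DReach G S2 x h2v := hx2.2.trans hh2Z.1
    obtain ⟨l1, hc1, hl1⟩ := List.exists_isChain_cons_of_relationReflTransGen hr1
    obtain ⟨l2, hc2, hl2⟩ := List.exists_isChain_cons_of_relationReflTransGen hr2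
    have hl1' : (t1 :: l1).getLast? = some x := by
      rw [List.getLast?_eq_getLast (List.cons_ne_nil _ _), hl1]
    have hl2' : (x :: l2).getLast? = some h2v := by
      rw [List.getLast?_eq_getLast (List.cons_ne_nil _ _), hl2]
    have hl2ne : l2 ≠ [] := by
      intro h
      subst h
      simp only [List.getLast?_singleton, Option.some_inj] at hl2'
      exact hxh2 hl2'
    set R : V → V → Prop := fun a b => G a b ∧ ((a ∉ S1 ∧ b ∉ S1) ∨ (a ∉ S2 ∧ b ∉ S2)) with hRdef
    have hcR1 : List.Chain R t1 l1 := hc1.imp (fun a b h => ⟨h.1, Or.inl h.2⟩)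
    have hcR2 : List.Chain R x l2 := hc2.imp (fun a b h => ⟨h.1, Or.inr h.2⟩)
    have hcomb : List.Chain R t1 (l1 ++ l2) := chain_append_chain l1 t1 x l2 hcR1 hl1' hcR2
    have hlastcomb : (t1 :: (l1 ++ l2)).getLast? = some h2v := by
      have h1 : t1 :: (l1 ++ l2) = (t1 :: l1) ++ l2 := by simp
      rw [h1, List.getLast?_append_of_ne_nil _ hl2ne]
      rcases List.exists_cons_of_ne_nil hl2ne with ⟨c, tl, rfl⟩
      rw [List.getLast?_cons_cons] at hl2'
      exact hl2'
    obtain ⟨l', hcl', hlast', hnd', hsub'⟩ :=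
      chain_dedup (l1 ++ l2).length (l1 ++ l2) t1 le_rfl hcomb
    rw [hlastcomb] at hlast'
    have hmem12 : ∀ y ∈ l1 ++ l2, y ∉ S1 ∨ y ∉ S2 := by
      intro y hy
      rcases List.mem_append.mp hy with hy | hy
      · exact Or.inl (chain_targets (fun a b h => h.2.2) l1 t1 hc1 y hy)
      · exact Or.inr (chain_targets (fun a b h => h.2.2) l2 x hc2 y hy)
    have ht1l' : t1 ∉ l' := (List.nodup_cons.mp hnd').1
    have hh2l' : h2v ∈ l' := by
      have := List.mem_of_mem_getLast? (hlast' ▸ rfl : h2v ∈ (t1 :: l').getLast?)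
      rcases List.mem_cons.mp this with h | h
      · exact absurd h.symm ht1h2
      · exact h
    -- members of l' other than h2v are outside S; and none equal t1
    have hl'S : ∀ y ∈ l', y ≠ h2v → y ∉ S := by
      intro y hy hyh2 hyS
      rcases hmem12 y (hsub' y hy) with h | h
      · rcases hmemS1 y hyS with h' | h'
        · exact h h'
        · exact ht1l' (h' ▸ hy)
      · rcases hmemS2 y hyS with h' | h'
        · exact h h'
        · exact hyh2 h'
    have hl'nd : l'.Nodup := (List.nodup_cons.mp hnd').2
    -- p3
    refine ⟨p1 ++ (l' ++ p2.tail), ?_, ?_, ?_⟩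
    · -- Nodup
      rw [List.nodup_append']
      refine ⟨h1n, ?_, ?_⟩
      · rw [List.nodup_append']
        refine ⟨hl'nd, h2n.sublist (List.tail_sublist p2), ?_⟩
        intro y hy hyt
        have hyS : y ∈ S := Or.inr (List.mem_of_mem_tail hyt)
        rcases eq_or_ne y h2v with rfl | hne
        · exact hh2tl hyt
        · exact hl'S y hy hne hyS
      · intro y hyp1 hy
        rcases List.mem_append.mp hy with hy | hy
        · rcases eq_or_ne y h2v with rfl | hne
          · exact hdisj h2v hyp1 hh2p2
          · exact hl'S y hy hne (Or.inl hyp1)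
        · exact hdisj y hyp1 (List.mem_of_mem_tail hy)
    · -- Chain'
      have hGl' : List.Chain G t1 l' := (show List.IsChain R (t1 :: l') from hcl').imp (fun a b h => h.1)
      have hGtail : List.Chain G h2v p2.tail := by
        have := h2c
        rw [← hp2eq] at this
        exact this
      have hchain : List.Chain G t1 (l' ++ p2.tail) :=
        chain_append_chain l' t1 h2v p2.tail hGl' hlast' hGtail
      -- combine with p1
      have hl'ne : l' ≠ [] := by
        intro h
        rw [h] at hh2l'
        exact List.not_mem_nil hh2l'
      rcases List.exists_cons_of_ne_nil hl'ne with ⟨c, tl, rfl⟩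
      have hGt1c : G t1 c := (List.chain_cons.mp hGl').1
      have hchain' : List.Chain' G (t1 :: (c :: tl ++ p2.tail)) := hchain
      have := List.IsChain.append (l₁ := p1) (l₂ := (c :: tl) ++ p2.tail) h1c
        hchain'.tail ?_
      · exact this
      · intro a ha b hb
        have ha' : a = t1 := by
          rw [List.getLast?_eq_getLast hp1ne] at ha
          exact (Option.some_inj.mp ha).symm
        have hb' : b = c := by
          simp only [List.cons_append, List.head?_cons, Option.mem_def, Option.some_inj] at hb
          exact hb.symm
        rw [ha', hb']
        exact hGt1c
    · -- DSep
      refine dsep_mono ?_ hsep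
      intro v hv
      simp only [Set.mem_setOf_eq, List.mem_append]
      rcases hv with hv | hv
      · exact Or.inl hv
      · rw [← hp2eq, List.mem_cons] at hv
        rcases hv with rfl | hv
        · exact Or.inr (Or.inl hh2l')
        · exact Or.inr (Or.inr hv)

theorem stmt0 {V : Type} [Fintype V] (G : V → V → Prop) (α : ℚ)
    (hα1 : 1/2 ≤ α) (hα2 : α < 1) (p1 p2 : List V)
    (hp1 : DIsPath G p1) (hp2 : DIsPath G p2)
    (hdisj : ∀ v, v ∈ p1 → v ∉ p2)
    (hsep : DSep G {v | v ∈ p1 ∨ v ∈ p2} α) :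
    ∃ p3 : List V, DIsPath G p3 ∧ DSep G {v | v ∈ p3} α := by
  obtain ⟨p3, hnd, hch, hds⟩ := aux G α hα1 (p1.length + p2.length) p1 p2 le_rfl
    hp1.2.1 hp1.2.2 hp2.2.1 hp2.2.2 hdisj hsep
  rcases eq_or_ne p3 [] with rfl | hne
  · refine ⟨[p1.head hp1.1], ⟨by simp, by simp, List.IsChain.singleton _⟩, ?_⟩
    refine dsep_mono ?_ hds
    intro v hv
    exact absurd hv (by simp)
  · exact ⟨p3, ⟨hne, hnd, hch⟩, hds⟩
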